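/- Let E be a real inner product space, u, u' ∈ E, and a, b ∈ [0, 1] real scalars. If ‖u‖ ≤ B, ‖u'‖ ≤ B, and ‖u − u'‖ ≥ ε with ε, B ≥ 0, then ‖a·u − b·u'‖² ≥ a·b·ε² − |a − b| · max(a, b) · B². -/

import Mathlib

/-- pessimistic squared lower bound when the orderings may mismatch. -/
theorem mismatched_squared_lower_bound
    {E : Type*} [NormedAddCommGroup E] [InnerProductSpace ℝ E]
    (u u' : E) (a b : ℝ) (ha : a ∈ Set.Icc (0:ℝ) 1) (hb : b ∈ Set.Icc (0:ℝ) 1)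
    (B : ℝ) (hB : 0 ≤ B) (hu : ‖u‖ ≤ B) (hu' : ‖u'‖ ≤ B)
    (ε : ℝ) (hε : 0 ≤ ε) (hsep : ε ≤ ‖u - u'‖) :
    a * b * ε ^ 2 - |a - b| * max a b * B ^ 2 ≤ ‖a • u - b • u'‖ ^ 2 := by
  obtain ⟨ha0, ha1⟩ := ha
  obtain ⟨hb0, hb1⟩ := hb
  have h1 : ‖a • u - b • u'‖ ^ 2
      = a^2 * ‖u‖^2 - 2*(a*b)*(inner ℝ u u' : ℝ) + b^2 * ‖u'‖^2 := by
    rw [@norm_sub_sq_real, real_inner_smul_left, real_inner_smul_right,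
      norm_smul, norm_smul]
    simp [mul_pow, sq_abs]
    ring
  have h2 : ‖u - u'‖ ^ 2 = ‖u‖^2 - 2*(inner ℝ u u' : ℝ) + ‖u'‖^2 :=
    @norm_sub_sq_real _ _ _ u u'
  have hε2 : ε ^ 2 ≤ ‖u - u'‖ ^ 2 := by
    have := norm_nonneg (u - u')
    nlinarith
  have hu2 : ‖u‖^2 ≤ B^2 := by nlinarith [norm_nonneg u]
  have hu'2 : ‖u'‖^2 ≤ B^2 := by nlinarith [norm_nonneg u']
  have h3 : a*b*ε^2 ≤ a*b*‖u - u'‖^2 :=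
    mul_le_mul_of_nonneg_left hε2 (mul_nonneg ha0 hb0)
  have h4 : a*b*‖u - u'‖^2
      = a*b*‖u‖^2 - 2*(a*b)*(inner ℝ u u' : ℝ) + a*b*‖u'‖^2 := by
    rw [h2]; ring
  rcases le_total b a with hab | hab
  · rw [abs_of_nonneg (by linarith), max_eq_left hab]
    have key : (a-b)*(b*‖u'‖^2) ≤ (a-b)*(a*B^2) := by
      apply mul_le_mul_of_nonneg_left _ (sub_nonneg.2 hab)
      nlinarith [sq_nonneg (‖u'‖)]
    have pos : 0 ≤ (a-b)*(a*‖u‖^2) :=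
      mul_nonneg (sub_nonneg.2 hab) (mul_nonneg ha0 (sq_nonneg _))
    linarith [key, pos, h3, h4]
  · rw [abs_of_nonpos (by linarith), max_eq_right hab]
    have key : (b-a)*(a*‖u‖^2) ≤ (b-a)*(b*B^2) := by
      apply mul_le_mul_of_nonneg_left _ (sub_nonneg.2 hab)
      nlinarith [sq_nonneg (‖u‖)]
    have pos : 0 ≤ (b-a)*(b*‖u'‖^2) :=
      mul_nonneg (sub_nonneg.2 hab) (mul_nonneg hb0 (sq_nonneg _))
    linarith [key, pos, h3, h4]
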